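/- Let U = {U_i} be a good cover of a topological space X (all finite nonempty intersections of cover elements are contractible). Suppose two paths γ, γ′ : I → X from x to y are carried by edge paths η, η′ on the nerve N(U) from vertex i to vertex j, respectively. If γ and γ′ are homotopic rel endpoints, then η and η′ are edge homotopic. -/

import Mathlib

/-!
STATEMENT 2: For a good cover `U` of `X`, if two paths `γ, γ'` from `x` to `y`, homotopic
rel endpoints, are carried by edge paths `η, η'` on the nerve of `U` from `i` to `j`, then
`η` and `η'` are edge homotopic.
-/

open unitInterval

variable {X : Type*} [TopologicalSpace X] {ι : Type*} [DecidableEq ι]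

/-- An abstract simplicial complex on a vertex type `V`. -/
structure ASC (V : Type*) where
  faces : Set (Finset V)
  down_closed : ∀ {s t : Finset V}, s ∈ faces → t ⊆ s → t.Nonempty → t ∈ faces

/-- The nerve of a cover `U`: finite nonempty index sets with nonempty intersection. -/
def nerve (U : ι → Set X) : ASC ι where
  faces := {s : Finset ι | s.Nonempty ∧ (⋂ i ∈ s, U i).Nonempty}
  down_closed := by
    rintro s t ⟨-, z, hz⟩ hts ht
    exact ⟨ht, z, by simp only [Set.mem_iInter] at hz ⊢; exact fun i hi => hz i (hts hi)⟩

/-- Elementary moves between edge paths: contracting/expanding across a 2-simplex, and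
removing/inserting a repeated vertex. -/
inductive EStep (K : ASC ι) : List ι → List ι → Prop
  | expand (p q : List ι) (u v w : ι) (h : ({u, v, w} : Finset ι) ∈ K.faces) :
      EStep K (p ++ u :: w :: q) (p ++ u :: v :: w :: q)
  | dup (p q : List ι) (u : ι) :
      EStep K (p ++ u :: q) (p ++ u :: u :: q)

/-- Edge homotopy of edge paths. -/
def EdgeHomotopic (K : ASC ι) : List ι → List ι → Prop :=
  Relation.EqvGen (EStep K)

/-- A good cover: an open cover all of whose finite nonempty intersections are contractible. -/
def IsGoodCover (U : ι → Set X) : Prop :=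
  (∀ i, IsOpen (U i)) ∧ (⋃ i, U i = Set.univ) ∧
    ∀ s : Finset ι, s.Nonempty → (⋂ i ∈ s, U i).Nonempty →
      ContractibleSpace (⋂ i ∈ s, U i : Set X)

/-- `γ` with the given parametrisation is carried by the edge path `η 0, …, η m`. -/
def Carries (U : ι → Set X) {x y : X} (γ : Path x y) (m : ℕ) (η : ℕ → ι) : Prop :=
  (∀ k : ℕ, k ≤ m → γ.extend ((k : ℝ) / m) ∈ U (η k)) ∧
  (∀ k : ℕ, k < m → ∀ t : ℝ, (k : ℝ) / m < t → t < ((k : ℝ) + 1) / m →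
      γ.extend t ∈ U (η k) ∪ U (η (k + 1))) ∧
  (m = 0 → ∀ t : unitInterval, γ t ∈ U (η 0))

/-- `γ` can be parametrised so that it is carried by the edge path `η 0, …, η m`. -/
def CarriedBy (U : ι → Set X) {x y : X} (γ : Path x y) (m : ℕ) (η : ℕ → ι) : Prop :=
  ∃ (f : unitInterval → unitInterval) (hf : Continuous f) (h0 : f 0 = 0) (h1 : f 1 = 1),
    Carries U (γ.reparam f hf h0 h1) m η

/-- The vertex list of the edge path `η 0, …, η m`. -/
def etaList (m : ℕ) (η : ℕ → ι) : List ι := (List.range (m + 1)).map η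


section EdgeHomotopyProof
set_option linter.unusedSectionVars false
variable (U : ι → Set X)



variable (U : ι → Set X)

lemma nerve_face3 {u v w : ι} {z : X} (hu : z ∈ U u) (hv : z ∈ U v) (hw : z ∈ U w) :
    ({u, v, w} : Finset ι) ∈ (nerve U).faces := by
  refine ⟨⟨u, by simp⟩, z, ?_⟩
  simp only [Set.mem_iInter]
  intro k hk
  rcases Finset.mem_insert.mp hk with rfl | hk
  · exact hu
  rcases Finset.mem_insert.mp hk with rfl | hk
  · exact hv
  · rw [Finset.mem_singleton.mp hk]; exact hw

lemma eh_eq {K : ASC ι} {l l' : List ι} (h : l = l') : EdgeHomotopic K l l' :=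
  h ▸ Relation.EqvGen.refl l

lemma eh_trans {K : ASC ι} {a b c : List ι} (h1 : EdgeHomotopic K a b)
    (h2 : EdgeHomotopic K b c) : EdgeHomotopic K a c :=
  Relation.EqvGen.trans a b c h1 h2

lemma eh_symm {K : ASC ι} {a b : List ι} (h : EdgeHomotopic K a b) : EdgeHomotopic K b a :=
  Relation.EqvGen.symm a b h

lemma eh_expand' (p q : List ι) (a v b : ι) {z : X}
    (hza : z ∈ U a) (hzv : z ∈ U v) (hzb : z ∈ U b) {l l' : List ι}
    (hl : l = p ++ a :: b :: q) (hl' : l' = p ++ a :: v :: b :: q) :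
    EdgeHomotopic (nerve U) l l' := by
  subst hl hl'
  exact Relation.EqvGen.rel _ _ (EStep.expand p q a v b (nerve_face3 U hza hzv hzb))

lemma eh_contract' (p q : List ι) (a v b : ι) {z : X}
    (hza : z ∈ U a) (hzv : z ∈ U v) (hzb : z ∈ U b) {l l' : List ι}
    (hl : l = p ++ a :: v :: b :: q) (hl' : l' = p ++ a :: b :: q) :
    EdgeHomotopic (nerve U) l l' :=
  eh_symm (eh_expand' U p q a v b hza hzv hzb hl' hl)

lemma eh_dup' {K : ASC ι} (p q : List ι) (a : ι) {l l' : List ι}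
    (hl : l = p ++ a :: q) (hl' : l' = p ++ a :: a :: q) : EdgeHomotopic K l l' := by
  subst hl hl'
  exact Relation.EqvGen.rel _ _ (EStep.dup p q a)

lemma eh_undup' {K : ASC ι} (p q : List ι) (a : ι) {l l' : List ι}
    (hl : l = p ++ a :: a :: q) (hl' : l' = p ++ a :: q) : EdgeHomotopic K l l' :=
  eh_symm (eh_dup' p q a hl' hl)

lemma EStep.context {K : ASC ι} {l1 l2 : List ι} (p q : List ι) (h : EStep K l1 l2) :
    EStep K (p ++ l1 ++ q) (p ++ l2 ++ q) := by
  cases h with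
  | expand p' q' u v w hf =>
      have := EStep.expand (K := K) (p ++ p') (q' ++ q) u v w hf
      simpa [List.append_assoc] using this
  | dup p' q' u =>
      have := EStep.dup (K := K) (p ++ p') (q' ++ q) u
      simpa [List.append_assoc] using this

lemma eh_context {K : ASC ι} (p q : List ι) {l1 l2 : List ι}
    (h : EdgeHomotopic K l1 l2) : EdgeHomotopic K (p ++ l1 ++ q) (p ++ l2 ++ q) := by
  induction h with
  | rel a b hab => exact Relation.EqvGen.rel _ _ (hab.context p q)
  | refl a => exact Relation.EqvGen.refl _
  | symm a b _ ih => exact Relation.EqvGen.symm _ _ ih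
  | trans a b c _ _ ih1 ih2 => exact Relation.EqvGen.trans _ _ _ ih1 ih2

lemma step_eh (u w e e' a hd : ι) (tl : List ι) {z1 z2 : X}
    (he : e = u ∨ e = w) (he' : e' = u ∨ e' = w)
    (hz1a : z1 ∈ U a) (hz1e' : z1 ∈ U e') (hz1hd : z1 ∈ U hd)
    (hz2e : z2 ∈ U e) (hz2a : z2 ∈ U a) (hz2e' : z2 ∈ U e') :
    EdgeHomotopic (nerve U) (u :: e :: a :: hd :: tl) (u :: e' :: hd :: tl) := by
  have s1 : EdgeHomotopic (nerve U) (u :: e :: a :: hd :: tl) (u :: e :: a :: e' :: hd :: tl) :=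
    eh_expand' U [u, e] tl a e' hd hz1a hz1e' hz1hd rfl rfl
  have s2 : EdgeHomotopic (nerve U) (u :: e :: a :: e' :: hd :: tl) (u :: e :: e' :: hd :: tl) :=
    eh_contract' U [u] (hd :: tl) e a e' hz2e hz2a hz2e' rfl rfl
  have s3 : EdgeHomotopic (nerve U) (u :: e :: e' :: hd :: tl) (u :: e' :: hd :: tl) := by
    by_cases hee : e = e'
    · subst hee
      exact eh_undup' [u] (hd :: tl) e rfl rfl
    · have hzu : z2 ∈ U u := by
        rcases he with rfl | rfl
        · exact hz2e
        · rcases he' with rfl | rfl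
          · exact hz2e'
          · exact absurd rfl hee
      exact eh_contract' U [] (hd :: tl) u e e' hzu hz2e hz2e' rfl rfl
  exact eh_trans (eh_trans s1 s2) s3

lemma block_aux (u w : ι) (hu : IsOpen (U u)) (hw : IsOpen (U w)) (s M : ℕ)
    (d : ℕ → ι) (pts : ℕ → X) (S : ℕ → Set X)
    (hSconn : ∀ b, s ≤ b → b < s + M → IsPreconnected (S b))
    (hSd : ∀ b, s ≤ b → b < s + M → S b ⊆ U (d b))
    (hSuw : ∀ b, s ≤ b → b < s + M → S b ⊆ U u ∪ U w)
    (hpl : ∀ b, s ≤ b → b < s + M → pts b ∈ S b)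
    (hpr : ∀ b, s ≤ b → b < s + M → pts (b + 1) ∈ S b)
    (hMw : pts (s + M) ∈ U w) :
    ∀ t b, s ≤ b → b + t = s + M → ∀ e, (e = u ∨ e = w) → pts b ∈ U e →
      EdgeHomotopic (nerve U) (u :: e :: (List.range' b t).map d ++ [w]) [u, w] := by
  intro t
  induction t with
  | zero =>
    intro b hsb hb e he hpe
    rcases he with h | h
    · rw [h]; exact eh_undup' [] [w] u (by simp) (by simp)
    · rw [h]; exact eh_undup' [u] [] w (by simp) (by simp)
  | succ t ih =>
    intro b hsb hb e he hpe
    have hbM : b < s + M := by omega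
    have hptsb1 : pts (b + 1) ∈ S b := hpr b hsb hbM
    obtain ⟨hd, tl, hrest, hhd⟩ :
        ∃ hd tl, (List.range' (b + 1) t).map d ++ [w] = hd :: tl ∧ pts (b + 1) ∈ U hd := by
      cases t with
      | zero =>
        have hbm : b + 1 = s + M := by omega
        exact ⟨w, [], rfl, hbm ▸ hMw⟩
      | succ t' =>
        refine ⟨d (b + 1), (List.range' (b + 2) t').map d ++ [w], by simp [List.range'_succ], ?_⟩
        exact hSd (b + 1) (by omega) (by omega) (hpl (b + 1) (by omega) (by omega))
    obtain ⟨e', he', hpe'⟩ : ∃ e', (e' = u ∨ e' = w) ∧ pts (b + 1) ∈ U e' := by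
      rcases hSuw b hsb hbM hptsb1 with h | h
      exacts [⟨u, Or.inl rfl, h⟩, ⟨w, Or.inr rfl, h⟩]
    obtain ⟨z2, hz2e, hz2a, hz2e'⟩ : ∃ z2, z2 ∈ U e ∧ z2 ∈ U (d b) ∧ z2 ∈ U e' := by
      by_cases hee : e = e'
      · exact ⟨pts b, hpe, hSd b hsb hbM (hpl b hsb hbM), hee ▸ hpe⟩
      · have h1 : (S b ∩ U u).Nonempty := by
          rcases he with rfl | rfl
          · exact ⟨pts b, hpl b hsb hbM, hpe⟩
          · rcases he' with rfl | rfl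
            · exact ⟨pts (b + 1), hptsb1, hpe'⟩
            · exact absurd rfl hee
        have h2 : (S b ∩ U w).Nonempty := by
          rcases he with rfl | rfl
          · rcases he' with rfl | rfl
            · exact absurd rfl hee
            · exact ⟨pts (b + 1), hptsb1, hpe'⟩
          · exact ⟨pts b, hpl b hsb hbM, hpe⟩
        obtain ⟨z, hzS, hzu, hzw⟩ := hSconn b hsb hbM (U u) (U w) hu hw (hSuw b hsb hbM) h1 h2
        refine ⟨z, ?_, hSd b hsb hbM hzS, ?_⟩
        · rcases he with rfl | rfl
          exacts [hzu, hzw]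
        · rcases he' with rfl | rfl
          exacts [hzu, hzw]
    have hstep := step_eh U u w e e' (d b) hd tl he he'
      (hSd b hsb hbM hptsb1) hpe' hhd hz2e hz2a hz2e'
    have heq1 : u :: e :: (List.range' b (t + 1)).map d ++ [w] = u :: e :: (d b) :: hd :: tl := by
      rw [List.range'_succ]
      simp only [List.map_cons, List.cons_append]
      rw [hrest]
    have heq2 : u :: e' :: hd :: tl = u :: e' :: (List.range' (b + 1) t).map d ++ [w] := by
      simp only [List.cons_append]
      rw [hrest]
    rw [heq1]
    refine eh_trans hstep ?_
    rw [heq2]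
    exact ih (b + 1) (by omega) (by omega) e' he' hpe'

lemma block_lemma (u w : ι) (hu : IsOpen (U u)) (hw : IsOpen (U w)) (s M : ℕ)
    (d : ℕ → ι) (pts : ℕ → X) (S : ℕ → Set X)
    (hSconn : ∀ b, s ≤ b → b < s + M → IsPreconnected (S b))
    (hSd : ∀ b, s ≤ b → b < s + M → S b ⊆ U (d b))
    (hSuw : ∀ b, s ≤ b → b < s + M → S b ⊆ U u ∪ U w)
    (hpl : ∀ b, s ≤ b → b < s + M → pts b ∈ S b)
    (hpr : ∀ b, s ≤ b → b < s + M → pts (b + 1) ∈ S b)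
    (h0 : pts s ∈ U u) (hMw : pts (s + M) ∈ U w) :
    EdgeHomotopic (nerve U) (u :: (List.range' s M).map d ++ [w]) [u, w] := by
  have h1 : EdgeHomotopic (nerve U) (u :: (List.range' s M).map d ++ [w])
      (u :: u :: (List.range' s M).map d ++ [w]) :=
    eh_dup' [] ((List.range' s M).map d ++ [w]) u (by simp) (by simp)
  exact eh_trans h1 (block_aux U u w hu hw s M d pts S hSconn hSd hSuw hpl hpr hMw M s le_rfl
    rfl u (Or.inl rfl) h0)



lemma lemmaA (hUopen : ∀ i, IsOpen (U i)) {x y : X} (δ : Path x y)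
    (m M : ℕ) (hm : 1 ≤ m) (hM : 1 ≤ M) (η : ℕ → ι) (c : ℕ → ι)
    (hcar : Carries U δ m η)
    (hc : ∀ b, b < m * M →
      δ.extend '' Set.Icc ((b : ℝ) / (m * M)) (((b : ℝ) + 1) / (m * M)) ⊆ U (c b)) :
    EdgeHomotopic (nerve U) (etaList m η) (η 0 :: (List.range' 0 (m * M)).map c ++ [η m]) := by
  have hmR : (0:ℝ) < m := by exact_mod_cast hm
  have hMne : (M:ℝ) ≠ 0 := by positivity
  have hnR : (0:ℝ) < (m*M : ℕ) := by positivity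
  have hdivle : ∀ a b : ℝ, a ≤ b → a/((m*M:ℕ):ℝ) ≤ b/((m*M:ℕ):ℝ) := fun a b h => by gcongr
  have hgrid : ∀ k : ℕ, ((k * M : ℕ) : ℝ) / ((m * M : ℕ) : ℝ) = (k : ℝ) / m := by
    intro k
    push_cast
    rw [mul_div_mul_right _ _ hMne]
  have hc' : ∀ b, b < m * M → δ.extend '' Set.Icc ((b : ℝ) / ((m*M:ℕ):ℝ)) (((b : ℝ) + 1) / ((m*M:ℕ):ℝ)) ⊆ U (c b) := by
    intro b hb
    have := hc b hb
    push_cast at this ⊢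
    exact this
  -- the endpoint membership facts
  have hcar1 : ∀ k : ℕ, k ≤ m → δ.extend (((k * M : ℕ) : ℝ) / ((m * M : ℕ) : ℝ)) ∈ U (η k) := by
    intro k hk
    rw [hgrid k]
    exact hcar.1 k hk
  -- blocks
  have blockk : ∀ k, k < m → EdgeHomotopic (nerve U)
      (η k :: (List.range' (k * M) M).map c ++ [η (k + 1)]) [η k, η (k + 1)] := by
    intro k hk
    have hkM : ∀ b, k * M ≤ b → b < k * M + M → b < m * M := by
      intro b hb1 hb2
      calc b < k * M + M := hb2
        _ = (k + 1) * M := by ring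
        _ ≤ m * M := Nat.mul_le_mul_right M hk
    apply block_lemma U (η k) (η (k+1)) (hUopen _) (hUopen _) (k*M) M c
      (fun b => δ.extend ((b : ℝ) / ((m * M : ℕ) : ℝ)))
      (fun b => δ.extend '' Set.Icc ((b : ℝ) / ((m*M:ℕ) : ℝ)) (((b : ℝ) + 1) / ((m*M:ℕ) : ℝ)))
    · intro b _ _
      exact (isPreconnected_Icc).image _ (δ.continuous_extend.continuousOn)
    · intro b hb1 hb2
      exact hc' b (hkM b hb1 hb2)
    · intro b hb1 hb2 z hz
      obtain ⟨t, ht, rfl⟩ := hz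
      have h1 : (k:ℝ)/m ≤ t := by
        rw [← hgrid k]
        exact le_trans (hdivle _ _ (by exact_mod_cast hb1)) ht.1
      have h2 : t ≤ ((k:ℝ)+1)/m := by
        have e1 : (((k+1) * M : ℕ) : ℝ)/((m*M:ℕ):ℝ) = ((k:ℝ)+1)/m := by
          have := hgrid (k+1); exact_mod_cast this
        rw [← e1]
        refine le_trans ht.2 (hdivle _ _ ?_)
        have h3 : b + 1 ≤ (k+1) * M := by
          have : (k+1)*M = k*M + M := by ring
          omega
        exact_mod_cast h3
      rcases eq_or_lt_of_le h1 with heq | hlt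
      · exact Or.inl (by rw [← heq]; exact hcar.1 k (le_of_lt hk))
      · rcases eq_or_lt_of_le h2 with heq2 | hlt2
        · refine Or.inr ?_
          rw [heq2]
          have := hcar.1 (k+1) hk
          push_cast at this
          exact this
        · exact hcar.2.1 k hk t hlt hlt2
    · intro b hb1 hb2
      exact ⟨(b:ℝ)/((m*M:ℕ):ℝ), ⟨le_refl _, hdivle _ _ (by linarith)⟩, rfl⟩
    · intro b hb1 hb2
      exact ⟨((b:ℝ)+1)/((m*M:ℕ):ℝ), ⟨hdivle _ _ (by linarith), le_refl _⟩, by norm_cast⟩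
    · exact hcar1 k (le_of_lt hk)
    · have := hcar1 (k+1) hk
      rw [show (k+1)*M = k*M+M by ring] at this
      exact this
  -- main induction replacing blocks left to right
  have hW : ∀ k, k ≤ m → EdgeHomotopic (nerve U) (η 0 :: (List.range' 0 (m+1)).map η)
      (η 0 :: ((List.range' 0 (k*M)).map c ++ (List.range' k (m+1-k)).map η)) := by
    intro k
    induction k with
    | zero => intro _; exact eh_eq (by simp)
    | succ k ih =>
      intro hk1
      have hk : k < m := hk1
      refine eh_trans (ih (by omega)) ?_
      have hsplitη : (List.range' k (m+1-k)).map η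
          = η k :: η (k+1) :: (List.range' (k+2) (m-k-1)).map η := by
        rw [show m+1-k = (m-k-1)+1+1 by omega, List.range'_succ, List.range'_succ]
        simp [show k+1+1 = k+2 from rfl]
      have e1 : EdgeHomotopic (nerve U)
          (η 0 :: ((List.range' 0 (k*M)).map c ++ (List.range' k (m+1-k)).map η))
          ((η 0 :: (List.range' 0 (k*M)).map c) ++
            (η k :: (List.range' (k*M) M).map c ++ [η (k+1)]) ++
            (List.range' (k+2) (m-k-1)).map η) := by
        have hWk : η 0 :: ((List.range' 0 (k*M)).map c ++ (List.range' k (m+1-k)).map η)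
            = (η 0 :: (List.range' 0 (k*M)).map c) ++ [η k, η (k+1)] ++
              (List.range' (k+2) (m-k-1)).map η := by
          rw [hsplitη]; simp
        rw [hWk]
        exact eh_context _ _ (eh_symm (blockk k hk))
      refine eh_trans e1 ?_
      have hs2 : List.range' (k*M) M = k*M :: List.range' (k*M+1) (M-1) := by
        have h := List.range'_succ (s := k*M) (n := M-1) (step := 1)
        rw [show M-1+1 = M by omega] at h
        simpa using h
      have hs4 : List.range' (k+1) (m-k) = (k+1) :: List.range' (k+2) (m-k-1) := by
        have h := List.range'_succ (s := k+1) (n := m-k-1) (step := 1)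
        rw [show m-k-1+1 = m-k by omega] at h
        simpa using h
      by_cases hk0 : k = 0
      · subst hk0
        refine eh_undup' [] ((List.range' 0 M).map c ++ [η 1] ++ (List.range' 2 (m-1)).map η)
          (η 0) ?_ ?_
        · simp
        · rw [show (0+1)*M = M by ring, show m+1-(0+1) = m by omega,
            show (List.range' 1 m) = 1 :: List.range' 2 (m-1) by
              have h := List.range'_succ (s := 1) (n := m-1) (step := 1)
              rw [show m-1+1 = m by omega] at h
              simpa using h]
          simp
      · -- k ≥ 1
        have hkM1 : 1 ≤ k*M := Nat.one_le_iff_ne_zero.mpr (by positivity)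
        have hs1 : List.range' 0 (k*M) = List.range' 0 (k*M-1) ++ [k*M-1] := by
          have h := List.range'_1_concat (s := 0) (n := k*M-1)
          rw [show k*M-1+1 = k*M by omega] at h
          simpa using h
        have hz2 : δ.extend (((k*M : ℕ) : ℝ) / ((m*M:ℕ):ℝ)) ∈ U (η k) := hcar1 k (le_of_lt hk)
        have hz1 : δ.extend (((k*M : ℕ) : ℝ) / ((m*M:ℕ):ℝ)) ∈ U (c (k*M - 1)) := by
          apply hc' (k*M-1) (lt_of_lt_of_le
            (Nat.sub_lt (Nat.mul_pos (Nat.pos_of_ne_zero hk0) hM) one_pos)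
            (Nat.mul_le_mul_right M (le_of_lt hk)))
          refine ⟨((k*M:ℕ):ℝ)/((m*M:ℕ):ℝ), ⟨?_, ?_⟩, rfl⟩
          · exact hdivle _ _ (by push_cast [Nat.cast_sub hkM1]; linarith)
          · exact hdivle _ _ (by push_cast [Nat.cast_sub hkM1]; linarith)
        have hz3 : δ.extend (((k*M : ℕ) : ℝ) / ((m*M:ℕ):ℝ)) ∈ U (c (k*M)) := by
          apply hc' (k*M) (by
            calc k*M < k*M + M := Nat.lt_add_of_pos_right (by omega)
              _ = (k+1) * M := by ring
              _ ≤ m*M := Nat.mul_le_mul_right M hk)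
          exact ⟨((k*M:ℕ):ℝ)/((m*M:ℕ):ℝ), ⟨le_refl _, hdivle _ _ (by linarith)⟩, rfl⟩
        refine eh_contract' U (η 0 :: (List.range' 0 (k*M-1)).map c)
          ((List.range' (k*M+1) (M-1)).map c ++ [η (k+1)] ++ (List.range' (k+2) (m-k-1)).map η)
          (c (k*M-1)) (η k) (c (k*M)) hz1 hz2 hz3 ?_ ?_
        · rw [hs1, hs2]; simp
        · have hs3 : List.range' 0 ((k+1)*M)
              = List.range' 0 (k*M-1) ++ ([k*M-1] ++ ([k*M] ++ List.range' (k*M+1) (M-1))) := by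
            have h := List.range'_append_1 (s := 0) (m := k*M) (n := M)
            simp only [Nat.zero_add] at h
            rw [show (k+1)*M = k*M + M by ring, ← h, hs1, hs2]
            simp
          rw [show m+1-(k+1) = m-k by omega, hs3, hs4]
          simp
  -- assemble
  have hstart : EdgeHomotopic (nerve U) (etaList m η) (η 0 :: (List.range' 0 (m+1)).map η) := by
    refine eh_dup' [] ((List.range' 1 m).map η) (η 0) ?_ ?_
    · rw [etaList, List.range_eq_range', List.range'_succ]
      simp
    · rw [List.range'_succ]
      simp
  refine eh_trans hstart (eh_trans (hW m le_rfl) (eh_eq ?_))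
  rw [show m+1-m = 1 by omega]
  simp

lemma ladder_aux (i j : ι) (n : ℕ) (Fa Fb : ℕ → ι) (q : ℕ → X)
    (h1 : ∀ b, b < n → q b ∈ U (Fb b)) (h2 : ∀ b, b < n → q b ∈ U (Fa b))
    (h3 : ∀ b, b < n → q (b+1) ∈ U (Fb b)) (h4 : ∀ b, b < n → q (b+1) ∈ U (Fa b))
    (h5 : q 0 ∈ U i) (h6 : q n ∈ U j) :
    ∀ t b, b + t = n →
      EdgeHomotopic (nerve U)
        (i :: ((List.range' 0 b).map Fb ++ (List.range' b t).map Fa) ++ [j])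
        (i :: (List.range' 0 n).map Fb ++ [j]) := by
  intro t
  induction t with
  | zero =>
    intro b hb
    apply eh_eq
    rw [show b = n by omega]
    simp
  | succ t ih =>
    intro b hb
    have hbn : b < n := by omega
    have hsplitb : List.range' 0 (b+1) = List.range' 0 b ++ [b] := by
      simpa using List.range'_1_concat (s := 0) (n := b)
    have m1 : EdgeHomotopic (nerve U)
        (i :: ((List.range' 0 b).map Fb ++ (List.range' b (t+1)).map Fa) ++ [j])
        (i :: ((List.range' 0 b).map Fb ++ Fb b :: Fa b :: (List.range' (b+1) t).map Fa) ++ [j]) := by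
      cases b with
      | zero =>
        exact eh_expand' U [] ((List.range' 1 t).map Fa ++ [j]) i (Fb 0) (Fa 0)
          h5 (h1 0 hbn) (h2 0 hbn) (by simp [List.range'_succ]) (by simp)
      | succ b' =>
        have hsplitb' : List.range' 0 (b'+1) = List.range' 0 b' ++ [b'] := by
          simpa using List.range'_1_concat (s := 0) (n := b')
        exact eh_expand' U (i :: (List.range' 0 b').map Fb)
          ((List.range' (b'+2) t).map Fa ++ [j]) (Fb b') (Fb (b'+1)) (Fa (b'+1))
          (h3 b' (by omega)) (h1 (b'+1) hbn) (h2 (b'+1) hbn)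
          (by rw [hsplitb']; simp [List.range'_succ])
          (by rw [hsplitb']; simp)
    have m2 : EdgeHomotopic (nerve U)
        (i :: ((List.range' 0 b).map Fb ++ Fb b :: Fa b :: (List.range' (b+1) t).map Fa) ++ [j])
        (i :: ((List.range' 0 b).map Fb ++ Fb b :: (List.range' (b+1) t).map Fa) ++ [j]) := by
      cases t with
      | zero =>
        exact eh_contract' U (i :: (List.range' 0 b).map Fb) [] (Fb b) (Fa b) j
          (h3 b hbn) (h4 b hbn) (by rw [(by omega : b+1 = n)]; exact h6)
          (by simp) (by simp)
      | succ t' =>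
        exact eh_contract' U (i :: (List.range' 0 b).map Fb)
          ((List.range' (b+2) t').map Fa ++ [j]) (Fb b) (Fa b) (Fa (b+1))
          (h3 b hbn) (h4 b hbn) (h2 (b+1) (by omega))
          (by simp [List.range'_succ]) (by simp [List.range'_succ])
    refine eh_trans m1 (eh_trans m2 ?_)
    have heq : i :: ((List.range' 0 b).map Fb ++ Fb b :: (List.range' (b+1) t).map Fa) ++ [j]
        = i :: ((List.range' 0 (b+1)).map Fb ++ (List.range' (b+1) t).map Fa) ++ [j] := by
      rw [hsplitb]; simp
    rw [heq]
    exact ih (b+1) (by omega)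

lemma ladder (i j : ι) (n : ℕ) (Fa Fb : ℕ → ι) (q : ℕ → X)
    (h1 : ∀ b, b < n → q b ∈ U (Fb b)) (h2 : ∀ b, b < n → q b ∈ U (Fa b))
    (h3 : ∀ b, b < n → q (b+1) ∈ U (Fb b)) (h4 : ∀ b, b < n → q (b+1) ∈ U (Fa b))
    (h5 : q 0 ∈ U i) (h6 : q n ∈ U j) :
    EdgeHomotopic (nerve U) (i :: (List.range' 0 n).map Fa ++ [j])
      (i :: (List.range' 0 n).map Fb ++ [j]) := by
  have := ladder_aux U i j n Fa Fb q h1 h2 h3 h4 h5 h6 n 0 (by omega)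
  simpa using this



lemma carries_upgrade {x y : X} (δ : Path x y) (m : ℕ) (η : ℕ → ι) (h : Carries U δ m η) :
    ∃ m₂ η₂, 1 ≤ m₂ ∧ Carries U δ m₂ η₂ ∧ η₂ 0 = η 0 ∧ η₂ m₂ = η m ∧
      EdgeHomotopic (nerve U) (etaList m η) (etaList m₂ η₂) := by
  rcases Nat.eq_zero_or_pos m with rfl | hm
  · have hall := h.2.2 rfl
    refine ⟨1, fun _ => η 0, le_refl 1, ⟨?_, ?_, by omega⟩, rfl, rfl, ?_⟩
    · intro k hk
      interval_cases k
      · simpa using hall 0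
      · simpa using hall 1
    · intro k hk t ht1 ht2
      interval_cases k
      norm_num at ht1 ht2
      have ht01 : t ∈ Set.Icc (0:ℝ) 1 := ⟨le_of_lt ht1, le_of_lt ht2⟩
      rw [Path.extend_apply δ ht01]
      exact Or.inl (hall _)
    · refine eh_dup' [] [] (η 0) ?_ ?_ <;> simp [etaList, List.range_succ]
  · exact ⟨m, η, hm, h, rfl, rfl, Relation.EqvGen.refl _⟩


end EdgeHomotopyProof

/-- If `γ` and `γ'` are homotopic rel endpoints and carried by edge paths
`η` (of length `m`) and `η'` (of length `m'`) on the nerve of the good cover `U`, both from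
`i` to `j`, then the two edge paths are edge homotopic on the nerve. -/
theorem homotopic_implies_edge_homotopic (U : ι → Set X) (hU : IsGoodCover U)
    {x y : X} {i j : ι} (γ γ' : Path x y) (hhom : γ.Homotopic γ')
    (m m' : ℕ) (η η' : ℕ → ι)
    (hη0 : η 0 = i) (hηm : η m = j) (hη'0 : η' 0 = i) (hη'm : η' m' = j)
    (hcar : CarriedBy U γ m η) (hcar' : CarriedBy U γ' m' η') :
    EdgeHomotopic (nerve U) (etaList m η) (etaList m' η') := by
  obtain ⟨hUopen, hUcover, -⟩ := hU
  obtain ⟨f, hf, hf0, hf1, hcd⟩ := hcar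
  obtain ⟨f', hf', hf'0, hf'1, hcd'⟩ := hcar'
  set δ : Path x y := γ.reparam f hf hf0 hf1 with hδdef
  set δ' : Path x y := γ'.reparam f' hf' hf'0 hf'1 with hδ'def
  obtain ⟨m₂, η₂, hm₂, hc₂, he0, hem, heh⟩ := carries_upgrade U δ m η hcd
  obtain ⟨m₂', η₂', hm₂', hc₂', he0', hem', heh'⟩ := carries_upgrade U δ' m' η' hcd'
  have hδδ' : δ.Homotopic δ' :=
    (Path.Homotopic.symm ⟨Path.Homotopy.reparam γ f hf hf0 hf1⟩).trans
      (hhom.trans ⟨Path.Homotopy.reparam γ' f' hf' hf'0 hf'1⟩)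
  obtain ⟨H⟩ := hδδ'
  -- Lebesgue number
  have hVopen : ∀ a : ι, IsOpen ((⇑H) ⁻¹' (U a)) := fun a => (hUopen a).preimage H.continuous
  have hVcover : (Set.univ : Set (I × I)) ⊆ ⋃ a, (⇑H) ⁻¹' (U a) := by
    intro p _
    have hp : H p ∈ ⋃ a, U a := by rw [hUcover]; trivial
    simpa using hp
  obtain ⟨ε, hε, hball⟩ := lebesgue_number_lemma_of_metric isCompact_univ hVopen hVcover
  set K := ⌈1/ε⌉₊ + 1 with hKdef
  have hK1 : 1 ≤ K := by omega
  set n := m₂ * m₂' * K with hndef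
  have hn1 : 1 ≤ n := Nat.one_le_iff_ne_zero.mpr (by positivity)
  have hnR : (0:ℝ) < (n:ℝ) := by exact_mod_cast hn1
  have hinv : (1:ℝ)/(n:ℝ) < ε := by
    have h1 : (1:ℝ)/ε < (K:ℝ) := by
      have h := Nat.le_ceil (1/ε)
      have hc : ((K:ℕ):ℝ) = (⌈1/ε⌉₊ : ℝ) + 1 := by rw [hKdef]; push_cast; ring
      rw [hc]; linarith
    have h2 : (K:ℝ) ≤ (n:ℝ) := by
      have : K ≤ n := Nat.le_mul_of_pos_left K (Nat.mul_pos hm₂ hm₂')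
      exact_mod_cast this
    have hKR : (0:ℝ) < K := by positivity
    calc (1:ℝ)/(n:ℝ) ≤ 1/(K:ℝ) := by gcongr
      _ < ε := by rw [div_lt_iff₀ hKR, mul_comm]; rw [div_lt_iff₀ hε] at h1; linarith
  -- choose the square labels
  have hsq : ∀ a b : ℕ, ∃ idx : ι, a < n → b < n → ∀ s t : I,
      (s:ℝ) ∈ Set.Icc ((a:ℝ)/(n:ℝ)) (((a:ℝ)+1)/(n:ℝ)) →
      (t:ℝ) ∈ Set.Icc ((b:ℝ)/(n:ℝ)) (((b:ℝ)+1)/(n:ℝ)) →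
      H (s, t) ∈ U idx := by
    intro a b
    by_cases hab : a < n ∧ b < n
    · obtain ⟨ha, hb⟩ := hab
      have has : (a:ℝ)/(n:ℝ) ∈ Set.Icc (0:ℝ) 1 :=
        ⟨by positivity, by rw [div_le_one hnR]; exact_mod_cast le_of_lt ha⟩
      have hbs : (b:ℝ)/(n:ℝ) ∈ Set.Icc (0:ℝ) 1 :=
        ⟨by positivity, by rw [div_le_one hnR]; exact_mod_cast le_of_lt hb⟩
      obtain ⟨idx, hidx⟩ := hball ((⟨(a:ℝ)/(n:ℝ), has⟩ : I), (⟨(b:ℝ)/(n:ℝ), hbs⟩ : I))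
        (Set.mem_univ _)
      refine ⟨idx, fun _ _ s t hs ht => hidx ?_⟩
      rw [Metric.mem_ball, Prod.dist_eq]
      have hdiv : ((a:ℝ)+1)/(n:ℝ) = (a:ℝ)/(n:ℝ) + 1/(n:ℝ) := by ring
      have hdiv' : ((b:ℝ)+1)/(n:ℝ) = (b:ℝ)/(n:ℝ) + 1/(n:ℝ) := by ring
      have h1n : (0:ℝ) ≤ 1/(n:ℝ) := by positivity
      apply max_lt
      · rw [Subtype.dist_eq, Real.dist_eq]
        rw [hdiv] at hs
        have : |(s:ℝ) - (a:ℝ)/(n:ℝ)| ≤ 1/(n:ℝ) :=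
          abs_sub_le_iff.mpr ⟨by linarith [hs.2], by linarith [hs.1]⟩
        exact lt_of_le_of_lt this hinv
      · rw [Subtype.dist_eq, Real.dist_eq]
        rw [hdiv'] at ht
        have : |(t:ℝ) - (b:ℝ)/(n:ℝ)| ≤ 1/(n:ℝ) :=
          abs_sub_le_iff.mpr ⟨by linarith [ht.2], by linarith [ht.1]⟩
        exact lt_of_le_of_lt this hinv
    · exact ⟨i, fun h1 h2 => absurd ⟨h1, h2⟩ hab⟩
  choose F hF using hsq
  -- membership of endpoints
  have hx : x ∈ U i := by
    have := hc₂.1 0 (Nat.zero_le _)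
    simp only [Nat.cast_zero, zero_div, Path.extend_zero] at this
    rwa [he0, hη0] at this
  have hy : y ∈ U j := by
    have := hc₂.1 m₂ le_rfl
    rw [div_self (by exact_mod_cast Nat.one_le_iff_ne_zero.mp hm₂ : (m₂:ℝ) ≠ 0),
      Path.extend_one] at this
    rwa [hem, hηm] at this
  -- bottom row: the subdivided carrier of δ
  have hbot : ∀ b, b < m₂ * (m₂' * K) → δ.extend ''
      Set.Icc ((b:ℝ)/((m₂:ℝ) * ((m₂'*K : ℕ):ℝ))) (((b:ℝ)+1)/((m₂:ℝ) * ((m₂'*K : ℕ):ℝ)))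
      ⊆ U (F 0 b) := by
    have hnn : (m₂:ℝ) * ((m₂'*K : ℕ):ℝ) = (n:ℝ) := by rw [hndef]; push_cast; ring
    intro b hb
    have hb' : b < n := by rw [hndef, mul_assoc]; exact hb
    rw [hnn]
    rintro z ⟨t, ht, rfl⟩
    have hbn : (b:ℝ)+1 ≤ (n:ℝ) := by exact_mod_cast hb'
    have ht01 : t ∈ Set.Icc (0:ℝ) 1 := by
      constructor
      · exact le_trans (by positivity) ht.1
      · refine le_trans ht.2 ?_
        rw [div_le_one hnR]; linarith
    rw [Path.extend_apply δ ht01]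
    have h0mem : (((0:I)):ℝ) ∈ Set.Icc (((0:ℕ):ℝ)/(n:ℝ)) ((((0:ℕ):ℝ)+1)/(n:ℝ)) := by
      have hco : (((0:I)):ℝ) = 0 := rfl
      rw [hco]
      norm_num
    have happ := hF 0 b hn1 hb' 0 ⟨t, ht01⟩ h0mem ht
    rwa [show H ((0:I), (⟨t, ht01⟩ : I)) = δ ⟨t, ht01⟩ from H.apply_zero _] at happ
  -- top row: the subdivided carrier of δ'
  have htop : ∀ b, b < m₂' * (m₂ * K) → δ'.extend ''
      Set.Icc ((b:ℝ)/((m₂':ℝ) * ((m₂*K : ℕ):ℝ))) (((b:ℝ)+1)/((m₂':ℝ) * ((m₂*K : ℕ):ℝ)))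
      ⊆ U (F (n-1) b) := by
    have hnn : (m₂':ℝ) * ((m₂*K : ℕ):ℝ) = (n:ℝ) := by rw [hndef]; push_cast; ring
    intro b hb
    have hb' : b < n := by rw [hndef, show m₂ * m₂' * K = m₂' * (m₂ * K) by ring]; exact hb
    rw [hnn]
    rintro z ⟨t, ht, rfl⟩
    have hbn : (b:ℝ)+1 ≤ (n:ℝ) := by exact_mod_cast hb'
    have ht01 : t ∈ Set.Icc (0:ℝ) 1 := by
      constructor
      · exact le_trans (by positivity) ht.1
      · refine le_trans ht.2 ?_
        rw [div_le_one hnR]; linarith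
    rw [Path.extend_apply δ' ht01]
    have h1mem : (((1:I)):ℝ) ∈ Set.Icc (((n-1:ℕ):ℝ)/(n:ℝ)) ((((n-1:ℕ):ℝ)+1)/(n:ℝ)) := by
      have hco : (((1:I)):ℝ) = 1 := rfl
      rw [Set.mem_Icc, hco, Nat.cast_sub hn1, Nat.cast_one]
      constructor
      · rw [div_le_one hnR]; linarith
      · rw [show ((n:ℝ) - 1 + 1) = (n:ℝ) by ring, div_self (ne_of_gt hnR)]
    have happ := hF (n-1) b (by omega) hb' 1 ⟨t, ht01⟩ h1mem ht
    rwa [show H ((1:I), (⟨t, ht01⟩ : I)) = δ' ⟨t, ht01⟩ from H.apply_one _] at happ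
  -- the rows are all edge homotopic
  have hrow : ∀ a, a < n → EdgeHomotopic (nerve U)
      (i :: (List.range' 0 n).map (F 0) ++ [j]) (i :: (List.range' 0 n).map (F a) ++ [j]) := by
    intro a
    induction a with
    | zero => intro _; exact eh_eq rfl
    | succ a ih =>
      intro ha
      refine eh_trans (ih (by omega)) ?_
      have hdivle : ∀ u v : ℝ, u ≤ v → u/(n:ℝ) ≤ v/(n:ℝ) := fun u v h => by gcongr
      have han : (a:ℝ)+1 ≤ (n:ℝ) := by
        have h' : a+1 ≤ n := le_of_lt ha
        exact_mod_cast h'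
      have hsA : ((a:ℝ)+1)/(n:ℝ) ∈ Set.Icc (0:ℝ) 1 := by
        constructor
        · positivity
        · rw [div_le_one hnR]; linarith
      set sA : I := ⟨((a:ℝ)+1)/(n:ℝ), hsA⟩ with hsAdef
      have htbm : ∀ b : ℕ, b ≤ n → ((b:ℝ)/(n:ℝ)) ∈ Set.Icc (0:ℝ) 1 := by
        intro b hb
        constructor
        · positivity
        · rw [div_le_one hnR]; exact_mod_cast hb
      set tb : ℕ → I := fun b => ⟨min ((b:ℝ)/(n:ℝ)) 1, by
        constructor
        · exact le_min (by positivity) zero_le_one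
        · exact min_le_right _ _⟩ with htbdef
      have htb : ∀ b : ℕ, b ≤ n → ((tb b):ℝ) = (b:ℝ)/(n:ℝ) := by
        intro b hb
        simp only [htbdef]
        exact min_eq_left (htbm b hb).2
      have hcoA : (sA:ℝ) = ((a:ℝ)+1)/(n:ℝ) := rfl
      have hsq_a1 : (sA:ℝ) ∈ Set.Icc (((a+1:ℕ):ℝ)/(n:ℝ)) ((((a+1:ℕ):ℝ)+1)/(n:ℝ)) := by
        rw [Set.mem_Icc, hcoA]
        push_cast
        exact ⟨le_refl _, hdivle _ _ (by linarith)⟩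
      have hsq_a : (sA:ℝ) ∈ Set.Icc ((a:ℝ)/(n:ℝ)) (((a:ℝ)+1)/(n:ℝ)) := by
        rw [Set.mem_Icc, hcoA]
        exact ⟨hdivle _ _ (by linarith), le_refl _⟩
      apply ladder U i j n (F a) (F (a+1)) (fun b => H (sA, tb b))
      · intro b hb
        refine hF (a+1) b ha hb sA (tb b) hsq_a1 ?_
        rw [htb b (le_of_lt hb)]
        exact ⟨le_refl _, hdivle _ _ (by linarith)⟩
      · intro b hb
        refine hF a b (by omega) hb sA (tb b) hsq_a ?_
        rw [htb b (le_of_lt hb)]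
        exact ⟨le_refl _, hdivle _ _ (by linarith)⟩
      · intro b hb
        refine hF (a+1) b ha hb sA (tb (b+1)) hsq_a1 ?_
        rw [htb (b+1) (by omega)]
        push_cast
        exact ⟨hdivle _ _ (by linarith), le_refl _⟩
      · intro b hb
        refine hF a b (by omega) hb sA (tb (b+1)) hsq_a ?_
        rw [htb (b+1) (by omega)]
        push_cast
        exact ⟨hdivle _ _ (by linarith), le_refl _⟩
      · have ht0 : tb 0 = 0 := by
          apply Subtype.ext
          rw [show (((0:I)):ℝ) = 0 from rfl, htb 0 (by omega)]
          norm_num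
        show H (sA, tb 0) ∈ U i
        rw [ht0]
        have hb0 : H (sA, (0:I)) = x := by
          have h := H.eq_fst sA (show (0:I) ∈ ({0,1} : Set I) from Set.mem_insert _ _)
          simpa using h
        rw [hb0]; exact hx
      · have ht1 : tb n = 1 := by
          apply Subtype.ext
          rw [show (((1:I)):ℝ) = 1 from rfl, htb n le_rfl, div_self (ne_of_gt hnR)]
        show H (sA, tb n) ∈ U j
        rw [ht1]
        have hb1 : H (sA, (1:I)) = y := by
          have h := H.eq_fst sA (show (1:I) ∈ ({0,1} : Set I) by
            exact Set.mem_insert_iff.mpr (Or.inr rfl))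
          simpa using h
        rw [hb1]; exact hy
  -- assemble the pieces
  have pieceA := lemmaA U hUopen δ m₂ (m₂' * K) hm₂ (Nat.mul_pos hm₂' hK1) η₂ (F 0) hc₂ hbot
  rw [show m₂ * (m₂' * K) = n by rw [hndef, mul_assoc]] at pieceA
  rw [he0, hη0, hem, hηm] at pieceA
  have pieceC := lemmaA U hUopen δ' m₂' (m₂ * K) hm₂' (Nat.mul_pos hm₂ hK1) η₂' (F (n-1))
    hc₂' htop
  rw [show m₂' * (m₂ * K) = n by rw [hndef]; ring] at pieceC
  rw [he0', hη'0, hem', hη'm] at pieceC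
  exact eh_trans heh (eh_trans pieceA (eh_trans (hrow (n-1) (by omega))
    (eh_trans (eh_symm pieceC) (eh_symm heh'))))
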